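/- Let {y_k, w_k} be the sequences generated by the GFDPG method, and define the auxiliary sequence s_0 := y_0 and s_k := s_{k−1} + t_{k−1}·(y_k − w_{k−1}) for k ≥ 1. Then for any k ≥ 1, Σ_{i=0}^{k−1} (1/2)·(T_i − t_i²)·‖y_{i+1} − w_i‖² + (T_{k−1}/L_k)·(q̃(y_k) − q̃(y_*)) ≤ (1/2)·(‖s_0 − y_*‖² − ‖s_k − y_*‖²). -/

import Mathlib

open scoped RealInnerProductSpace


lemma grad_ineq {V : Type*} [NormedAddCommGroup V] [InnerProductSpace ℝ V] [CompleteSpace V]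
    {F : V → ℝ} (hF : ConvexOn ℝ Set.univ F) {g x : V} (hg : HasGradientAt F g x) (z : V) :
    F x + ⟪z - x, g⟫ ≤ F z := by
  set φ : ℝ → ℝ := fun l => F (x + l • (z - x)) with hφ
  have hconv : ConvexOn ℝ Set.univ φ := by
    have h1 : ConvexOn ℝ ((AffineMap.lineMap x z : ℝ →ᵃ[ℝ] V) ⁻¹' Set.univ)
        (F ∘ (AffineMap.lineMap x z : ℝ →ᵃ[ℝ] V)) := hF.comp_affineMap _
    have h2 : φ = F ∘ (AffineMap.lineMap x z : ℝ →ᵃ[ℝ] V) := by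
      funext l
      simp [hφ, AffineMap.lineMap_apply, add_comm]
    rw [h2]
    simpa using h1
  have hderiv : HasDerivAt φ ⟪g, z - x⟫ 0 := by
    have hf : HasFDerivAt F (InnerProductSpace.toDual ℝ V g : V →L[ℝ] ℝ) x := hg
    have hh : HasDerivAt (fun l : ℝ => x + l • (z - x)) (z - x) 0 := by
      simpa using ((hasDerivAt_id (0:ℝ)).smul_const (z - x)).const_add x
    have hf0 : HasFDerivAt F (InnerProductSpace.toDual ℝ V g : V →L[ℝ] ℝ)
        (x + (0:ℝ) • (z - x)) := by simpa using hf
    have := hf0.comp_hasDerivAt (0:ℝ) hh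
    simp [InnerProductSpace.toDual_apply_apply] at this; exact this
  have := hconv.le_slope_of_hasDerivAt (Set.mem_univ 0) (Set.mem_univ 1) zero_lt_one hderiv
  rw [slope_def_field] at this
  simp [hφ] at this
  rw [real_inner_comm]
  linarith [this]

lemma strong_min {V : Type*} [NormedAddCommGroup V] [InnerProductSpace ℝ V]
    {h : V → ℝ} (hh : ConvexOn ℝ Set.univ h) {L : ℝ} (hL : 0 < L) {w yp : V}
    (hmin : IsMinOn (fun y => h y + L / 2 * ‖y - w‖^2) Set.univ yp) (z : V) :
    h yp + L / 2 * ‖yp - w‖^2 + L / 2 * ‖z - yp‖^2 ≤ h z + L / 2 * ‖z - w‖^2 := by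
  set A : ℝ := h z - h yp + L * ⟪yp - w, z - yp⟫ with hA
  have key : 0 ≤ A := by
    have step : ∀ l : ℝ, 0 < l → l ≤ 1 → 0 ≤ A + L * l / 2 * ‖z - yp‖^2 := by
      intro l hl0 hl1
      have hmem := hmin (Set.mem_univ (yp + l • (z - yp)))
      simp only [Set.mem_setOf_eq] at hmem
      have hcvx : h (yp + l • (z - yp)) ≤ (1 - l) * h yp + l * h z := by
        have := hh.2 (Set.mem_univ yp) (Set.mem_univ z)
          (by linarith : (0:ℝ) ≤ 1 - l) (le_of_lt hl0) (by ring)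
        have heq : (1 - l) • yp + l • z = yp + l • (z - yp) := by
          rw [sub_smul, one_smul, smul_sub]; abel
        rw [heq] at this
        simpa [smul_eq_mul] using this
      have hquad : ‖yp + l • (z - yp) - w‖^2
          = ‖yp - w‖^2 + 2 * l * ⟪yp - w, z - yp⟫ + l^2 * ‖z - yp‖^2 := by
        have : yp + l • (z - yp) - w = (yp - w) + l • (z - yp) := by abel
        rw [this, norm_add_sq_real, real_inner_smul_right, norm_smul]
        simp [abs_of_pos hl0]
        ring
      have hψ : h yp + L / 2 * ‖yp - w‖^2 ≤ h (yp + l • (z - yp))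
          + L / 2 * ‖yp + l • (z - yp) - w‖^2 := hmem
      rw [hquad] at hψ
      have : 0 ≤ l * (A + L * l / 2 * ‖z - yp‖^2) := by
        have := hcvx
        rw [hA]
        nlinarith [hψ]
      nlinarith [this, hl0]
    have htend : Filter.Tendsto (fun l : ℝ => A + L * l / 2 * ‖z - yp‖^2)
        (nhdsWithin 0 (Set.Ioi 0)) (nhds A) := by
      have : Filter.Tendsto (fun l : ℝ => A + L * l / 2 * ‖z - yp‖^2) (nhds 0) (nhds (A + L * 0 / 2 * ‖z - yp‖^2)) := by
        apply Filter.Tendsto.add tendsto_const_nhds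
        exact (((tendsto_const_nhds.mul Filter.tendsto_id).div_const 2).mul tendsto_const_nhds)
      simpa using this.mono_left nhdsWithin_le_nhds
    refine ge_of_tendsto htend ?_
    filter_upwards [Ioc_mem_nhdsGT_of_mem (by norm_num : (0:ℝ) ∈ Set.Ico 0 1)] with l hl
    exact step l hl.1 hl.2
  have hsplit : ‖z - w‖^2 = ‖yp - w‖^2 + 2 * ⟪yp - w, z - yp⟫ + ‖z - yp‖^2 := by
    have : z - w = (yp - w) + (z - yp) := by abel
    rw [this, norm_add_sq_real]
  rw [hsplit]
  rw [hA] at key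
  nlinarith [key]

/-- For the GFDPG sequences, with the auxiliary sequence `s_0 := y_0`,
`s_k := s_{k−1} + t_{k−1}·(y_k − w_{k−1})`, for any `k ≥ 1`,
`Σ_{i=0}^{k−1} (1/2)·(T_i − t_i²)·‖y_{i+1} − w_i‖² + (T_{k−1}/L_k)·(q̃(y_k) − q̃(y_*))
  ≤ (1/2)·(‖s_0 − y_*‖² − ‖s_k − y_*‖²)`. -/
theorem gfdpg_key_inequality
    {V : Type*} [NormedAddCommGroup V] [InnerProductSpace ℝ V] [FiniteDimensional ℝ V]
    (F G : V → ℝ) (LF : ℝ)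
    (hF : ConvexOn ℝ Set.univ F) (hG : ConvexOn ℝ Set.univ G)
    (F' : V → V) (hF' : ∀ y, HasGradientAt F (F' y) y)
    (hLip : ∀ y w : V, ‖F' y - F' w‖ ≤ LF * ‖y - w‖)
    -- q̃ := F + G attains its minimum at y_*
    (ystar : V) (hystar : ∀ y, F ystar + G ystar ≤ F y + G y)
    -- p_L(w) : the unique minimizer over y of Q_L(y, w)
    (P : ℝ → V → V)
    (hP : ∀ L, 0 < L → ∀ w, IsMinOn
      (fun y => F w + ⟪y - w, F' w⟫ + L / 2 * ‖y - w‖^2 + G y) Set.univ (P L w))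
    -- the GFDPG method
    (y w : ℕ → V) (t T Lk : ℕ → ℝ)
    (hw0 : w 0 = y 0) (hL0 : 0 < Lk 0)
    (ht0 : t 0 = T 0) (ht0pos : 0 < t 0) (ht0le : t 0 ≤ 1)
    (hT : ∀ k : ℕ, T k = ∑ i ∈ Finset.range (k+1), t i)
    (hLmono : ∀ k : ℕ, Lk k ≤ Lk (k+1))
    (hdesc : ∀ k : ℕ,
      F (P (Lk (k+1)) (w k)) + G (P (Lk (k+1)) (w k)) ≤
        F (w k) + ⟪P (Lk (k+1)) (w k) - w k, F' (w k)⟫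
          + Lk (k+1) / 2 * ‖P (Lk (k+1)) (w k) - w k‖^2 + G (P (Lk (k+1)) (w k)))
    (hy : ∀ k : ℕ, y (k+1) = P (Lk (k+1)) (w k))
    (htpos : ∀ k : ℕ, 0 < t (k+1)) (htsq : ∀ k : ℕ, t (k+1) ^ 2 ≤ T (k+1))
    (hw : ∀ k : ℕ, w (k+1) = y (k+1)
      + (((T k - t k) * t (k+1)) / (t k * T (k+1))) • (y (k+1) - y k)
      + (((t k ^ 2 - T k) * t (k+1)) / (t k * T (k+1))) • (y (k+1) - w k))
    -- the auxiliary sequence s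
    (s : ℕ → V) (hs0 : s 0 = y 0)
    (hs : ∀ k : ℕ, s (k+1) = s k + t k • (y (k+1) - w k))
    (k : ℕ) (hk : 1 ≤ k) :
    (∑ i ∈ Finset.range k, (1/2) * (T i - t i ^ 2) * ‖y (i+1) - w i‖^2)
      + (T (k-1) / Lk k) * ((F (y k) + G (y k)) - (F ystar + G ystar))
      ≤ (1/2) * (‖s 0 - ystar‖^2 - ‖s k - ystar‖^2) := by
  
  have tpos : ∀ n, 0 < t n := by
    intro n; cases n with
    | zero => exact ht0pos
    | succ m => exact htpos m
  have hTrec : ∀ n, T (n+1) = T n + t (n+1) := by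
    intro n; rw [hT, hT, Finset.sum_range_succ]
  have hT0 : T 0 = t 0 := by rw [hT]; simp
  have Tpos : ∀ n, 0 < T n := by
    intro n; induction n with
    | zero => rw [hT0]; exact ht0pos
    | succ m ih => rw [hTrec]; exact add_pos ih (htpos m)
  have Lpos : ∀ n, 0 < Lk n := by
    intro n; induction n with
    | zero => exact hL0
    | succ m ih => exact lt_of_lt_of_le ih (hLmono m)
  have hTge : ∀ n, 0 ≤ T n - t n := by
    intro n; cases n with
    | zero => rw [hT0]; simp
    | succ m => linarith [hTrec m, (Tpos m).le]
  have vpos : ∀ z : V, 0 ≤ (F z + G z) - (F ystar + G ystar) := by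
    intro z; linarith [hystar z]
  -- key one-step inequality
  have keystep : ∀ n (z : V),
      Lk (n+1)/2 * ‖y (n+1) - w n‖^2 + Lk (n+1) * ⟪w n - z, y (n+1) - w n⟫
        ≤ (F z + G z) - (F (y (n+1)) + G (y (n+1))) := by
    intro n z
    have hL : (0:ℝ) < Lk (n+1) := Lpos (n+1)
    have hconv : ConvexOn ℝ Set.univ (fun v => F (w n) + ⟪v - w n, F' (w n)⟫ + G v) := by
      refine ConvexOn.add ⟨convex_univ, ?_⟩ hG
      intro a _ b _ p q hp hq hpq
      apply le_of_eq
      simp only [smul_eq_mul, inner_sub_left, inner_add_left, real_inner_smul_left]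
      linear_combination (⟪w n, F' (w n)⟫ - F (w n)) * hpq
    have hmin : IsMinOn (fun v => (F (w n) + ⟪v - w n, F' (w n)⟫ + G v)
        + Lk (n+1) / 2 * ‖v - w n‖^2) Set.univ (y (n+1)) := by
      have heq : (fun v => (F (w n) + ⟪v - w n, F' (w n)⟫ + G v) + Lk (n+1) / 2 * ‖v - w n‖^2)
          = (fun v => F (w n) + ⟪v - w n, F' (w n)⟫ + Lk (n+1) / 2 * ‖v - w n‖^2 + G v) := by
        funext v; ring
      rw [heq, hy n]
      exact hP _ hL (w n)
    have hsm : (F (w n) + ⟪y (n+1) - w n, F' (w n)⟫ + G (y (n+1)))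
        + Lk (n+1) / 2 * ‖y (n+1) - w n‖^2 + Lk (n+1) / 2 * ‖z - y (n+1)‖^2
        ≤ (F (w n) + ⟪z - w n, F' (w n)⟫ + G z) + Lk (n+1) / 2 * ‖z - w n‖^2 :=
      strong_min hconv hL hmin z
    have hdc : F (y (n+1)) + G (y (n+1)) ≤ (F (w n) + ⟪y (n+1) - w n, F' (w n)⟫ + G (y (n+1)))
        + Lk (n+1) / 2 * ‖y (n+1) - w n‖^2 := by
      have := hdesc n
      rw [← hy n] at this
      linarith [this]
    have hgr : F (w n) + ⟪z - w n, F' (w n)⟫ + G z ≤ F z + G z := by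
      have := grad_ineq hF (hF' (w n)) z
      linarith [this]
    have hcomb : F (y (n+1)) + G (y (n+1)) + Lk (n+1)/2 * ‖z - y (n+1)‖^2
        ≤ F z + G z + Lk (n+1)/2 * ‖z - w n‖^2 := by
      linarith [hsm, hdc, hgr]
    have hnormid : ‖z - y (n+1)‖^2
        = ‖z - w n‖^2 - 2*⟪z - w n, y (n+1) - w n⟫ + ‖y (n+1) - w n‖^2 := by
      have hv : z - y (n+1) = (z - w n) - (y (n+1) - w n) := by abel
      rw [hv, norm_sub_sq_real]
    have hflip : ⟪w n - z, y (n+1) - w n⟫ = -⟪z - w n, y (n+1) - w n⟫ := by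
      have hv : w n - z = -(z - w n) := by abel
      rw [hv, inner_neg_left]
    rw [hnormid] at hcomb
    rw [hflip]
    linarith [hcomb]
  -- the vector identity  T n • w n - (T n - t n) • y n = t n • s n
  have hM : ∀ n, T n • w n - (T n - t n) • y n = t n • s n := by
    intro n; induction n with
    | zero =>
      rw [hw0, hs0, hT0, sub_self, zero_smul, sub_zero]
    | succ m ih =>
      have htm : t m ≠ 0 := (tpos m).ne'
      have hTm1 : T m + t (m+1) ≠ 0 := by
        have := Tpos (m+1); rw [hTrec m] at this; exact this.ne'
      refine smul_right_injective V htm ?_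
      show t m • (T (m+1) • w (m+1) - (T (m+1) - t (m+1)) • y (m+1))
          = t m • (t (m+1) • s (m+1))
      have h1 : t m • (t (m+1) • s (m+1))
          = t (m+1) • (t m • s m) + (t m * t m * t (m+1)) • (y (m+1) - w m) := by
        rw [hs m]; module
      rw [h1, ← ih, hw m, hTrec m]
      match_scalars <;> field_simp [htm, hTm1] <;> ring
  -- one-step scalar inequality
  have step : ∀ n, (1/2)*(T n - t n^2)*‖y (n+1) - w n‖^2
      + (T n / Lk (n+1)) * ((F (y (n+1)) + G (y (n+1))) - (F ystar + G ystar))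
      - ((T n - t n) / Lk (n+1)) * ((F (y n) + G (y n)) - (F ystar + G ystar))
      ≤ (1/2)*(‖s n - ystar‖^2 - ‖s (n+1) - ystar‖^2) := by
    intro n
    have hL : (0:ℝ) < Lk (n+1) := Lpos (n+1)
    set L := Lk (n+1) with hLdef
    set u := y (n+1) - w n with hu
    have A1 := keystep n (y n)
    have A2 := keystep n ystar
    have d1 : (T n - t n) * (1/2*‖u‖^2 + ⟪w n - y n, u⟫)
        ≤ (T n - t n) * (((F (y n) + G (y n)) - (F (y (n+1)) + G (y (n+1)))) / L) := by
      refine mul_le_mul_of_nonneg_left ?_ (hTge n)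
      rw [le_div_iff₀ hL]
      nlinarith [A1]
    have d2 : t n * (1/2*‖u‖^2 + ⟪w n - ystar, u⟫)
        ≤ t n * (((F ystar + G ystar) - (F (y (n+1)) + G (y (n+1)))) / L) := by
      refine mul_le_mul_of_nonneg_left ?_ (tpos n).le
      rw [le_div_iff₀ hL]
      nlinarith [A2]
    have hinner : (T n - t n) * ⟪w n - y n, u⟫ + t n * ⟪w n - ystar, u⟫
        = t n * ⟪s n - ystar, u⟫ := by
      have hv : (T n - t n) • (w n - y n) + t n • (w n - ystar) = t n • (s n - ystar) := by
        have expand : (T n - t n) • (w n - y n) + t n • (w n - ystar)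
            = (T n • w n - (T n - t n) • y n) - t n • ystar := by module
        rw [expand, hM n]; module
      have := congrArg (fun v => ⟪v, u⟫) hv
      simpa [inner_add_left, inner_sub_left, real_inner_smul_left] using this
    have hnorm : ‖s (n+1) - ystar‖^2
        = ‖s n - ystar‖^2 + 2*(t n * ⟪s n - ystar, u⟫) + t n^2 * ‖u‖^2 := by
      rw [hs n]
      have hv : s n + t n • u - ystar = (s n - ystar) + t n • u := by abel
      rw [hv, norm_add_sq_real, real_inner_smul_right, norm_smul, mul_pow,
        Real.norm_eq_abs, sq_abs]
    have hd1' : (T n - t n) * (((F (y n) + G (y n)) - (F (y (n+1)) + G (y (n+1)))) / L)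
        = ((T n - t n)/L) * ((F (y n) + G (y n)) - (F ystar + G ystar))
          - ((T n - t n)/L) * ((F (y (n+1)) + G (y (n+1))) - (F ystar + G ystar)) := by
      ring
    have hd2' : t n * (((F ystar + G ystar) - (F (y (n+1)) + G (y (n+1)))) / L)
        = - (t n / L) * ((F (y (n+1)) + G (y (n+1))) - (F ystar + G ystar)) := by
      ring
    rw [hd1'] at d1
    rw [hd2'] at d2
    have hsplit : (T n / L) * ((F (y (n+1)) + G (y (n+1))) - (F ystar + G ystar))
        = ((T n - t n)/L) * ((F (y (n+1)) + G (y (n+1))) - (F ystar + G ystar))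
          + (t n / L) * ((F (y (n+1)) + G (y (n+1))) - (F ystar + G ystar)) := by
      ring
    rw [hsplit]
    linarith [d1, d2, hinner, hnorm]
  -- telescoping
  obtain ⟨m, rfl⟩ : ∃ m, k = m + 1 := ⟨k - 1, (Nat.succ_pred_eq_of_pos hk).symm⟩
  clear hk
  induction m with
  | zero =>
    have hstep := step 0
    have h0 : T 0 - t 0 = 0 := by rw [hT0, sub_self]
    rw [h0, zero_div, zero_mul, sub_zero] at hstep
    simpa [Finset.sum_range_one] using hstep
  | succ m ih =>
    have hstep := step (m+1)
    have hTsub2 : T (m+1) - t (m+1) = T m := by linarith [hTrec m]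
    rw [hTsub2] at hstep
    have hdivle : T m / Lk (m+2) ≤ T m / Lk (m+1) := by
      apply div_le_div_of_nonneg_left (Tpos m).le (Lpos (m+1)) (hLmono (m+1))
    have hmul : (T m / Lk (m+2)) * ((F (y (m+1)) + G (y (m+1))) - (F ystar + G ystar))
        ≤ (T m / Lk (m+1)) * ((F (y (m+1)) + G (y (m+1))) - (F ystar + G ystar)) :=
      mul_le_mul_of_nonneg_right hdivle (vpos (y (m+1)))
    simp only [Nat.add_sub_cancel] at ih ⊢
    rw [Finset.sum_range_succ]
    linarith [hstep, ih, hmul]
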